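/- Let p be an odd prime and n ≥ 2. Set Γ = {−(p−1)/2, …, −1, 0, 1, …, (p−1)/2}^n, Γ' = Γ \ {0}, and Γ* = (2π/p)Γ. Define τ(ω) = τ^d(ω) := p^{-n} Σ_{ν∈Γ} e^{-iω·ν}, and for ν ∈ Γ': t_ν(ω) := e^{-iω·ν} − 1 and t_ν^d(ω) := p^{-n} e^{-iω·ν} − p^{-2n} Σ_{μ∈Γ} e^{-iω·μ}. Then (τ, (t_ν)_{ν∈Γ'}) and (τ^d, (t_ν^d)_{ν∈Γ'}) form n-D combined biorthogonal masks with dilation p·I_n: for all ω ∈ ℝ^n and γ ∈ Γ*, \overline{τ(ω+γ)} τ^d(ω) + Σ_{ν∈Γ'} \overline{t_ν(ω+γ)} t_ν^d(ω) = 1 if γ = 0 and = 0 if γ ∈ Γ* \ {0}. -/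

import Mathlib

open scoped Real Classical

noncomputable section

/-- `eC x = e^{-ix}` as a complex number. -/
def eC (x : ℝ) : ℂ := Complex.exp (-(Complex.I * (x : ℂ)))

/-- `Γ = {-(p-1)/2, …, -1, 0, 1, …, (p-1)/2}^n`. -/
def haarGamma (n p : ℕ) : Finset (Fin n → ℤ) :=
  Fintype.piFinset fun _ => Finset.Icc (-(((p : ℤ) - 1) / 2)) (((p : ℤ) - 1) / 2)

/-- `Γ* = (2π/p)Γ`. -/
def haarGammaStar (n p : ℕ) : Finset (Fin n → ℝ) :=
  (haarGamma n p).image fun ν i => 2 * π / p * (ν i : ℝ)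

/-- The centered `n`-D Haar refinement mask with dilation `p`:
`τ(ω) = τᵈ(ω) = p^{-n} Σ_{ν∈Γ} e^{-iω·ν}`. -/
def haarTau (n p : ℕ) (ω : Fin n → ℝ) : ℂ :=
  (1 / (p : ℂ) ^ n) * ∑ ν ∈ haarGamma n p, eC (∑ i, ω i * (ν i : ℝ))

/-- The analysis wavelet masks `t_ν(ω) = e^{-iω·ν} - 1`. -/
def haarT (n p : ℕ) (ν : Fin n → ℤ) (ω : Fin n → ℝ) : ℂ :=
  eC (∑ i, ω i * (ν i : ℝ)) - 1

/-- The synthesis wavelet masks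
`t_νᵈ(ω) = p^{-n} e^{-iω·ν} - p^{-2n} Σ_{μ∈Γ} e^{-iω·μ}`. -/
def haarTd (n p : ℕ) (ν : Fin n → ℤ) (ω : Fin n → ℝ) : ℂ :=
  (1 / (p : ℂ) ^ n) * eC (∑ i, ω i * (ν i : ℝ)) -
    (1 / (p : ℂ) ^ (2 * n)) * ∑ μ ∈ haarGamma n p, eC (∑ i, ω i * (μ i : ℝ))

lemma eC_add (x y : ℝ) : eC (x + y) = eC x * eC y := by
  simp only [eC, ← Complex.exp_add]; congr 1; push_cast; ring

lemma eC_zero : eC 0 = 1 := by simp [eC]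

lemma conj_eC (x : ℝ) : (starRingEnd ℂ) (eC x) = eC (-x) := by
  simp only [eC, ← Complex.exp_conj, map_neg, map_mul, Complex.conj_I, Complex.conj_ofReal]
  congr 1; push_cast; ring

lemma eC_int_mul (c : ℝ) (k : ℤ) : eC (c * k) = (eC c) ^ k := by
  rw [eC, eC, ← Complex.exp_int_mul]; congr 1; push_cast; ring

lemma eC_sum {ι : Type*} (s : Finset ι) (f : ι → ℝ) :
    eC (∑ i ∈ s, f i) = ∏ i ∈ s, eC (f i) := by
  simp only [eC, ← Complex.exp_sum]; congr 1; push_cast [Finset.mul_sum]; ring_nf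
  simp [Finset.sum_neg_distrib]

lemma sum_zpow_Icc (ζ : ℂ) (hζ : ζ ≠ 0) (h : ℕ) :
    ∑ k ∈ Finset.Icc (-(h:ℤ)) (h:ℤ), ζ ^ k =
      ζ ^ (-(h:ℤ)) * ∑ j ∈ Finset.range (2*h+1), ζ ^ j := by
  rw [Finset.mul_sum]
  refine Finset.sum_nbij' (fun k => (k + h).toNat) (fun j => (j : ℤ) - h) ?_ ?_ ?_ ?_ ?_
  · intro a ha
    simp only [Finset.mem_Icc] at ha
    simp only [Finset.mem_range]
    omega
  · intro a ha
    simp only [Finset.mem_range] at ha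
    simp only [Finset.mem_Icc]
    omega
  · intro a ha
    simp only [Finset.mem_Icc] at ha
    show ((a + (h:ℤ)).toNat : ℤ) - h = a
    omega
  · intro a ha
    show ((a : ℤ) - h + h).toNat = a
    omega
  · intro a ha
    simp only [Finset.mem_Icc] at ha
    rw [← zpow_natCast ζ ((a + h).toNat), ← zpow_add₀ hζ]
    congr 1
    omega

lemma geom_root_sum (ζ : ℂ) (p : ℕ) (hne : ζ ≠ 1) (hroot : ζ ^ p = 1) :
    ∑ j ∈ Finset.range p, ζ ^ j = 0 := by
  rw [geom_sum_eq hne, hroot, sub_self, zero_div]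

lemma oneDim (p : ℕ) (hp : p.Prime) (hodd : p ≠ 2) (m : ℤ)
    (hm : m ∈ Finset.Icc (-(((p:ℤ)-1)/2)) (((p:ℤ)-1)/2)) :
    ∑ k ∈ Finset.Icc (-(((p:ℤ)-1)/2)) (((p:ℤ)-1)/2), eC (-(2*π/p*m) * k) =
      if m = 0 then (p : ℂ) else 0 := by
  obtain ⟨h, hh⟩ : ∃ h : ℕ, p = 2*h+1 := by
    rcases hp.eq_two_or_odd' with h2 | ⟨h, hh⟩
    · exact absurd h2 hodd
    · exact ⟨h, hh⟩
  have hb : (((p:ℤ)-1)/2) = (h : ℤ) := by omega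
  rw [hb] at hm ⊢
  have hpR : (p : ℝ) ≠ 0 := Nat.cast_ne_zero.mpr hp.pos.ne'
  by_cases hm0 : m = 0
  · simp only [hm0, if_true]
    have hcard : (Finset.Icc (-(h:ℤ)) (h:ℤ)).card = p := by
      rw [Int.card_Icc]; omega
    calc ∑ k ∈ Finset.Icc (-(h:ℤ)) (h:ℤ), eC (-(2*π/p*(0:ℤ)) * k)
        = ∑ k ∈ Finset.Icc (-(h:ℤ)) (h:ℤ), 1 := by
          refine Finset.sum_congr rfl fun k _ => ?_
          norm_num [eC_zero]
      _ = (p : ℂ) := by rw [Finset.sum_const, hcard]; simp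
  · simp only [hm0, if_false]
    set c : ℝ := -(2*π/p*m) with hc
    set ζ : ℂ := eC c with hz
    have hζ0 : ζ ≠ 0 := Complex.exp_ne_zero _
    have hterm : ∀ k : ℤ, eC (c * k) = ζ ^ k := fun k => eC_int_mul c k
    have hzp : ζ ^ p = 1 := by
      have h1 : ζ ^ ((p:ℤ)) = eC (c * p) := (eC_int_mul c p).symm
      rw [zpow_natCast] at h1
      rw [h1]
      have h2 : c * (p : ℝ) = -(2*π*m) := by
        rw [hc]; field_simp
      rw [h2, eC, ← Complex.exp_int_mul_two_pi_mul_I m]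
      congr 1; push_cast; ring
    have hne1 : ζ ≠ 1 := by
      intro h1
      rw [hz, eC, Complex.exp_eq_one_iff] at h1
      obtain ⟨k, hk⟩ := h1
      have h2 := congrArg Complex.im hk
      simp [Complex.mul_im, Complex.mul_re] at h2
      have hpi := Real.pi_ne_zero
      have hmk : m = k * p := by
        rw [hc] at h2
        field_simp at h2
        have h3 : (2*π) * (m:ℝ) = (2*π) * ((k:ℝ)*p) := by linear_combination (2*π) * h2
        have h4 := mul_left_cancel₀ (by positivity : (2*π:ℝ) ≠ 0) h3
        exact_mod_cast h4
      have hd : (p:ℤ) ∣ m := ⟨k, by rw [hmk, mul_comm]⟩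
      have hle : (p:ℤ) ≤ |m| := Int.le_of_dvd (abs_pos.mpr hm0) ((dvd_abs _ _).mpr hd)
      simp only [Finset.mem_Icc] at hm
      have := abs_le.mpr hm
      omega
    calc ∑ k ∈ Finset.Icc (-(h:ℤ)) (h:ℤ), eC (c * k)
        = ∑ k ∈ Finset.Icc (-(h:ℤ)) (h:ℤ), ζ ^ k :=
          Finset.sum_congr rfl fun k _ => hterm k
      _ = ζ ^ (-(h:ℤ)) * ∑ j ∈ Finset.range (2*h+1), ζ ^ j := sum_zpow_Icc ζ hζ0 h
      _ = 0 := by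
          rw [← hh, geom_root_sum ζ p hne1 hzp, mul_zero]

lemma charSum (n p : ℕ) (hp : p.Prime) (hodd : p ≠ 2) (m : Fin n → ℤ)
    (hm : m ∈ haarGamma n p) :
    ∑ ν ∈ haarGamma n p, eC (-(∑ i, (2*π/p*(m i)) * (ν i : ℝ))) =
      if m = 0 then ((p:ℂ))^n else 0 := by
  have hstep : ∀ ν : Fin n → ℤ,
      eC (-(∑ i, (2*π/p*(m i)) * (ν i : ℝ))) =
        ∏ i, eC (-(2*π/p*(m i)) * (ν i : ℝ)) := by
    intro ν
    rw [← eC_sum]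
    congr 1
    rw [← Finset.sum_neg_distrib]
    exact Finset.sum_congr rfl fun i _ => by ring
  rw [Finset.sum_congr rfl fun ν _ => hstep ν]
  rw [haarGamma, Finset.sum_prod_piFinset (Finset.Icc (-(((p:ℤ)-1)/2)) (((p:ℤ)-1)/2)) (fun i k => eC (-(2*π/p*(m i)) * (k:ℝ)))]
  have hmem : ∀ i, m i ∈ Finset.Icc (-(((p:ℤ)-1)/2)) (((p:ℤ)-1)/2) := by
    rw [haarGamma, Fintype.mem_piFinset] at hm
    exact hm
  rw [Finset.prod_congr rfl fun i _ => oneDim p hp hodd (m i) (hmem i)]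
  by_cases hm0 : m = 0
  · simp [hm0]
  · rw [if_neg hm0]
    obtain ⟨i, hi⟩ : ∃ i, m i ≠ 0 := by
      by_contra hcon
      push_neg at hcon
      exact hm0 (funext hcon)
    exact Finset.prod_eq_zero (Finset.mem_univ i) (by rw [if_neg hi])

lemma card_haarGamma (n p : ℕ) (hp : p.Prime) (hodd : p ≠ 2) :
    (haarGamma n p).card = p ^ n := by
  obtain ⟨h, hh⟩ : ∃ h : ℕ, p = 2*h+1 := by
    rcases hp.eq_two_or_odd' with h2 | ⟨h, hh⟩
    · exact absurd h2 hodd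
    · exact ⟨h, hh⟩
  rw [haarGamma, Fintype.card_piFinset]
  simp only [Int.card_Icc]
  rw [Finset.prod_const, Finset.card_univ, Fintype.card_fin]
  congr 1
  omega

/-- **Example 4: the centered `n`-D Haar combined biorthogonal masks with odd prime
dilation `p`.**  The masks `τ = τᵈ`, `t_ν`, `t_νᵈ` form `n`-D combined biorthogonal
masks with dilation `p·Iₙ`. -/
theorem haar_combined_biorthogonal_masks
    (p : ℕ) (hp : p.Prime) (hodd : p ≠ 2) (n : ℕ) (hn : 2 ≤ n) :
    ∀ ω : Fin n → ℝ, ∀ γ ∈ haarGammaStar n p,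
      (starRingEnd ℂ) (haarTau n p (ω + γ)) * haarTau n p ω +
        ∑ ν ∈ (haarGamma n p).erase 0,
          (starRingEnd ℂ) (haarT n p ν (ω + γ)) * haarTd n p ν ω =
      if γ = 0 then 1 else 0 := by
  intro ω γ hγ
  obtain ⟨m, hm, rfl⟩ := Finset.mem_image.mp hγ
  have hpC : ((p:ℂ)) ≠ 0 := Nat.cast_ne_zero.mpr hp.pos.ne'
  have hpR : ((p:ℝ)) ≠ 0 := Nat.cast_ne_zero.mpr hp.pos.ne'
  set g : Fin n → ℝ := fun i => 2*π/p*(m i : ℝ) with hg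
  set K : ℂ := 1/(p:ℂ)^n with hK
  set Sω : ℂ := ∑ μ ∈ haarGamma n p, eC (∑ i, ω i * (μ i : ℝ)) with hSω
  set Sγ : ℂ := ∑ ν ∈ haarGamma n p, eC (-(∑ i, (ω + g) i * (ν i : ℝ))) with hSγ
  set G : ℂ := ∑ ν ∈ haarGamma n p, eC (-(∑ i, g i * (ν i : ℝ))) with hG
  have hKp : K * (p:ℂ)^n = 1 := by
    rw [hK]; field_simp
  -- conjugate of tau
  have hconj : (starRingEnd ℂ) (haarTau n p (ω + g)) = K * Sγ := by
    rw [haarTau, map_mul, map_sum]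
    congr 1
    · simp [hK]
    · exact Finset.sum_congr rfl fun ν _ => conj_eC _
  -- zero term vanishes
  have hzero : (starRingEnd ℂ) (haarT n p 0 (ω + g)) * haarTd n p 0 ω = 0 := by
    have : haarT n p 0 (ω + g) = 0 := by
      simp [haarT, eC_zero]
    rw [this, map_zero, zero_mul]
  have h0mem : (0 : Fin n → ℤ) ∈ haarGamma n p := by
    rw [haarGamma, Fintype.mem_piFinset]
    intro i
    simp only [Pi.zero_apply, Finset.mem_Icc]
    have := hp.two_le
    omega
  rw [Finset.sum_erase (haarGamma n p) (f := fun ν => (starRingEnd ℂ) (haarT n p ν (ω + g)) * haarTd n p ν ω) hzero]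
  -- per-term expansion
  have hterm : ∀ ν ∈ haarGamma n p,
      (starRingEnd ℂ) (haarT n p ν (ω + g)) * haarTd n p ν ω =
        K * eC (-(∑ i, g i * (ν i : ℝ)))
        - K^2 * Sω * eC (-(∑ i, (ω + g) i * (ν i : ℝ)))
        - K * eC (∑ i, ω i * (ν i : ℝ))
        + K^2 * Sω := by
    intro ν _
    have h2n : (1 / (p : ℂ) ^ (2 * n)) = K^2 := by
      rw [hK, div_pow, one_pow, ← pow_mul, mul_comm n 2]
    have hprod : eC (-(∑ i, (ω + g) i * (ν i : ℝ))) * eC (∑ i, ω i * (ν i : ℝ)) =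
        eC (-(∑ i, g i * (ν i : ℝ))) := by
      rw [← eC_add]
      congr 1
      have : (∑ i, (ω + g) i * (ν i : ℝ)) =
          (∑ i, ω i * (ν i : ℝ)) + ∑ i, g i * (ν i : ℝ) := by
        rw [← Finset.sum_add_distrib]
        exact Finset.sum_congr rfl fun i _ => by simp [Pi.add_apply]; ring
      rw [this]; ring
    rw [haarT, haarTd, map_sub, map_one, conj_eC, h2n, ← hSω]
    calc (eC (-(∑ i, (ω + g) i * (ν i : ℝ))) - 1) *
          (K * eC (∑ i, ω i * (ν i : ℝ)) - K^2 * Sω)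
        = K * (eC (-(∑ i, (ω + g) i * (ν i : ℝ))) * eC (∑ i, ω i * (ν i : ℝ)))
          - K^2 * Sω * eC (-(∑ i, (ω + g) i * (ν i : ℝ)))
          - K * eC (∑ i, ω i * (ν i : ℝ)) + K^2 * Sω := by ring
      _ = _ := by rw [hprod]
  rw [Finset.sum_congr rfl hterm]
  have hsplit : ∑ ν ∈ haarGamma n p,
      (K * eC (-(∑ i, g i * (ν i : ℝ)))
        - K^2 * Sω * eC (-(∑ i, (ω + g) i * (ν i : ℝ)))
        - K * eC (∑ i, ω i * (ν i : ℝ))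
        + K^2 * Sω) =
      K * G - K^2 * Sω * Sγ - K * Sω + ((p:ℂ)^n) * (K^2 * Sω) := by
    rw [Finset.sum_add_distrib, Finset.sum_sub_distrib, Finset.sum_sub_distrib,
      ← Finset.mul_sum, ← Finset.mul_sum, ← Finset.mul_sum, Finset.sum_const,
      card_haarGamma n p hp hodd, ← hG, ← hSγ, ← hSω, nsmul_eq_mul]
    push_cast
    ring
  rw [hsplit, hconj, haarTau, ← hSω]
  -- character sum
  have hGval : G = if m = 0 then ((p:ℂ))^n else 0 := by
    rw [hG]
    exact charSum n p hp hodd m hm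
  have hiff : (g = 0) ↔ m = 0 := by
    rw [hg]
    constructor
    · intro h
      funext i
      have h1 := congrFun h i
      simp only [Pi.zero_apply] at h1
      have hne : 2*π/(p:ℝ) ≠ 0 := by positivity
      have h2 : (m i : ℝ) = 0 := by
        rcases mul_eq_zero.mp h1 with h2 | h2
        · exact absurd h2 hne
        · exact h2
      exact_mod_cast h2
    · intro h
      funext i
      simp [h]
  rw [hGval]
  by_cases hm0 : m = 0
  · rw [if_pos (hiff.mpr hm0), if_pos hm0]
    linear_combination (1 + K * Sω) * hKp
  · rw [if_neg (fun h => hm0 (hiff.mp h)), if_neg hm0]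
    linear_combination (K * Sω) * hKp
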